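/- Let P be an N-point set in [0,1)^d, let j ∈ ℕ_{-1}^d and m ∈ D_j, and suppose the dyadic interval I_{j,m} contains at most B points of P. Then the Haar coefficient of the discrepancy function satisfies |⟨D_P, h_{j,m}⟩| ≤ (B/N) · 2^{-|j|} + C_d · 2^{-2|j|} for a constant C_d depending only on d. -/

import Mathlib

open MeasureTheory

/-- One-dimensional dyadic Haar function `h_{j,m}` on `[0,1)`.
For `j = -1` (encoded by `j < 0`) it is the indicator of `[0,1)`; for `j ≥ 0` it is `1`
on the left half of the dyadic interval `I_{j,m} = [m/2^j, (m+1)/2^j)`, `-1` on the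
right half, and `0` elsewhere. -/
noncomputable def haar1 (j : ℤ) (m : ℕ) (x : ℝ) : ℝ :=
  if j < 0 then (if 0 ≤ x ∧ x < 1 then 1 else 0)
  else if (m : ℝ) / 2 ^ j.toNat ≤ x ∧ x < (2 * m + 1) / 2 ^ (j.toNat + 1) then 1
  else if (2 * m + 1) / 2 ^ (j.toNat + 1) ≤ x ∧ x < (m + 1) / 2 ^ j.toNat then -1
  else 0

/-- Multivariate (tensor product) dyadic Haar function `h_{j,m}` on `[0,1)^d`. -/
noncomputable def haarD {d : ℕ} (j : Fin d → ℤ) (m : Fin d → ℕ) (x : Fin d → ℝ) : ℝ :=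
  ∏ i, haar1 (j i) (m i) (x i)

/-- The level `|j| = ∑ max(j_i, 0)` of a level vector `j ∈ ℕ_{-1}^d`. -/
def absj {d : ℕ} (j : Fin d → ℤ) : ℕ := ∑ i, (j i).toNat

/-- `(j, m)` is a valid Haar index: each `j i ∈ ℕ_{-1} = {-1, 0, 1, ...}` and
`m i ∈ D_{j i} = {0, ..., 2^{max(j i,0)} - 1}` (so `m i = 0` when `j i = -1`). -/
def validIdx {d : ℕ} (j : Fin d → ℤ) (m : Fin d → ℕ) : Prop :=
  (∀ i, -1 ≤ j i) ∧ ∀ i, m i < 2 ^ (j i).toNat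

/-- The Haar coefficient `⟨f, h_{j,m}⟩ = ∫_{[0,1]^d} f(x) h_{j,m}(x) dx`. -/
noncomputable def haarCoef {d : ℕ} (f : (Fin d → ℝ) → ℝ) (j : Fin d → ℤ) (m : Fin d → ℕ) : ℝ :=
  ∫ x in Set.Icc (0 : Fin d → ℝ) 1, f x * haarD j m x

open Classical in
/-- The discrepancy function of the `N`-point set `P` in `[0,1)^d`:
`D_P(x) = (1/N) ∑_{z ∈ P} 1_{[0,x)}(z) − x_1⋯x_d`. -/
noncomputable def discF {d : ℕ} (N : ℕ) (P : Fin N → Fin d → ℝ) (x : Fin d → ℝ) : ℝ :=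
  (1 / (N : ℝ)) * ∑ k : Fin N, (if ∀ i, 0 ≤ P k i ∧ P k i < x i then (1 : ℝ) else 0)
    - ∏ i, x i

/-- `x` belongs to the one-dimensional dyadic interval `I_{j,m}`
(`I_{-1,0} = [0,1)` for `j = -1`). -/
def memI (j : ℤ) (m : ℕ) (x : ℝ) : Prop :=
  if j < 0 then 0 ≤ x ∧ x < 1
  else (m : ℝ) / 2 ^ j.toNat ≤ x ∧ x < ((m : ℝ) + 1) / 2 ^ j.toNat

section dyadicHelpers

open Set

lemma pi_Icc_eq {d : ℕ} : (Set.univ.pi fun _ : Fin d => Icc (0:ℝ) 1) = Icc (0:Fin d→ℝ) 1 := by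
  rw [← Set.pi_univ_Icc]; rfl

lemma indicator_pi_prod {d : ℕ} (g : Fin d → ℝ → ℝ) (x : Fin d → ℝ) :
    (Icc (0:Fin d→ℝ) 1).indicator (fun y => ∏ i, g i (y i)) x
      = ∏ i, (Icc (0:ℝ) 1).indicator (g i) (x i) := by
  rw [← pi_Icc_eq]
  by_cases h : x ∈ Set.univ.pi fun _ : Fin d => Icc (0:ℝ) 1
  · rw [Set.indicator_of_mem h]
    exact Finset.prod_congr rfl fun i _ => (Set.indicator_of_mem (h i (Set.mem_univ i)) _).symm
  · rw [Set.indicator_of_notMem h]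
    rw [Set.mem_pi] at h; push_neg at h
    obtain ⟨i, -, hi⟩ := h
    exact (Finset.prod_eq_zero (Finset.mem_univ i) (Set.indicator_of_notMem hi _)).symm

lemma measurableSet_IccPi {d : ℕ} : MeasurableSet (Icc (0:Fin d→ℝ) 1) := by
  rw [← pi_Icc_eq]; exact MeasurableSet.univ_pi fun _ => measurableSet_Icc

lemma tensor_integral {d : ℕ} (g : Fin d → ℝ → ℝ) :
    ∫ x in Icc (0:Fin d → ℝ) 1, ∏ i, g i (x i) = ∏ i, ∫ t in Icc (0:ℝ) 1, g i t := by
  rw [← MeasureTheory.integral_indicator measurableSet_IccPi]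
  simp_rw [indicator_pi_prod]
  rw [MeasureTheory.integral_fintype_prod_volume_eq_prod (f := fun i => (Icc (0:ℝ) 1).indicator (g i))]
  exact Finset.prod_congr rfl fun i _ => MeasureTheory.integral_indicator measurableSet_Icc

lemma tensor_integrable {d : ℕ} (g : Fin d → ℝ → ℝ)
    (hg : ∀ i, MeasureTheory.IntegrableOn (g i) (Icc (0:ℝ) 1)) :
    MeasureTheory.IntegrableOn (fun x : Fin d → ℝ => ∏ i, g i (x i)) (Icc 0 1) := by
  refine (MeasureTheory.integrable_indicator_iff measurableSet_IccPi).mp ?_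
  have : (Icc (0:Fin d→ℝ) 1).indicator (fun x => ∏ i, g i (x i))
      = fun x => ∏ i, (Icc (0:ℝ) 1).indicator (g i) (x i) := funext (indicator_pi_prod g)
  rw [this]
  exact MeasureTheory.Integrable.fintype_prod fun i =>
    (MeasureTheory.integrable_indicator_iff measurableSet_Icc).mpr (hg i)

lemma int_ind_one {S : Set ℝ} (hS : MeasurableSet S) (hsub : S ⊆ Icc 0 1) :
    ∫ t in Icc (0:ℝ) 1, S.indicator (fun _ => (1:ℝ)) t = (MeasureTheory.volume S).toReal := by
  rw [MeasureTheory.setIntegral_indicator hS, Set.inter_eq_right.mpr hsub,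
    MeasureTheory.setIntegral_const]
  simp
  rfl

lemma int_id_Ico {x y : ℝ} (hxy : x ≤ y) :
    ∫ t in Ico x y, t = (y^2 - x^2)/2 := by
  rw [MeasureTheory.restrict_Ico_eq_restrict_Ioc, ← intervalIntegral.integral_of_le hxy,
    integral_id]

lemma int_ind_id' {x y : ℝ} (hxy : x ≤ y) (hsub : Ico x y ⊆ Icc 0 1) :
    ∫ t in Icc (0:ℝ) 1, (Ico x y).indicator (fun s => s) t = (y^2 - x^2)/2 := by
  rw [MeasureTheory.setIntegral_indicator measurableSet_Ico, Set.inter_eq_right.mpr hsub,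
    int_id_Ico hxy]

lemma ind_inter_Ioi {S : Set ℝ} {z t : ℝ} (h : z < t) :
    (S ∩ Ioi z).indicator (fun _ => (1:ℝ)) t = S.indicator (fun _ => (1:ℝ)) t := by
  by_cases hS : t ∈ S
  · rw [Set.indicator_of_mem hS, Set.indicator_of_mem (Set.mem_inter hS (Set.mem_Ioi.mpr h))]
  · rw [Set.indicator_of_notMem hS, Set.indicator_of_notMem (fun hx => hS hx.1)]

lemma ind_inter_Ioi' {S : Set ℝ} {z t : ℝ} (h : ¬ z < t) :
    (S ∩ Ioi z).indicator (fun _ => (1:ℝ)) t = 0 :=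
  Set.indicator_of_notMem (fun hx => h hx.2) _

lemma mul_ind_one (S : Set ℝ) (t : ℝ) :
    t * S.indicator (fun _ => (1:ℝ)) t = S.indicator (fun s => s) t := by
  by_cases h : t ∈ S <;> simp [h]

end dyadicHelpers

section oneDlemmas

open Set MeasureTheory

lemma haar1_eq_pos {j : ℤ} (hj : ¬ j < 0) (m : ℕ) :
    haar1 j m = fun t => (Ico ((m:ℝ)/2^j.toNat) ((2*(m:ℝ)+1)/2^(j.toNat+1))).indicator (fun _ => (1:ℝ)) t
      - (Ico ((2*(m:ℝ)+1)/2^(j.toNat+1)) (((m:ℝ)+1)/2^j.toNat)).indicator (fun _ => (1:ℝ)) t := by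
  funext t
  unfold haar1
  rw [if_neg hj]
  simp only [Set.indicator_apply, Set.mem_Ico]
  split_ifs <;> push_neg at * <;> try norm_num
  all_goals try linarith

lemma haar1_eq_neg {j : ℤ} (hj : j < 0) (m : ℕ) :
    haar1 j m = fun t => (Ico (0:ℝ) 1).indicator (fun _ => (1:ℝ)) t := by
  funext t
  unfold haar1
  rw [if_pos hj]
  simp only [Set.indicator_apply, Set.mem_Ico]

lemma oneD_A {j : ℤ} {m : ℕ} (hm : m < 2 ^ j.toNat) (z : ℝ)
    (hz0 : 0 ≤ z) (hz1 : z < 1) :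
    |∫ t in Icc (0:ℝ) 1, (if z < t then (1:ℝ) else 0) * haar1 j m t| ≤ ((2:ℝ) ^ j.toNat)⁻¹ ∧
    (¬ memI j m z → (∫ t in Icc (0:ℝ) 1, (if z < t then (1:ℝ) else 0) * haar1 j m t) = 0) ∧
    IntegrableOn (fun t => (if z < t then (1:ℝ) else 0) * haar1 j m t) (Icc 0 1) := by
  by_cases hj : j < 0
  · -- j = -1
    have he : (fun t => (if z < t then (1:ℝ) else 0) * haar1 j m t)
        = fun t => (Ico (0:ℝ) 1 ∩ Ioi z).indicator (fun _ => (1:ℝ)) t := by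
      funext t
      by_cases hzt : z < t
      · rw [if_pos hzt, one_mul, ind_inter_Ioi hzt, haar1_eq_neg hj]
      · rw [if_neg hzt, zero_mul, ind_inter_Ioi' hzt]
    have hSeq : Ico (0:ℝ) 1 ∩ Ioi z = Ioo z 1 := by
      ext t
      simp only [Set.mem_inter_iff, Set.mem_Ico, Set.mem_Ioi, Set.mem_Ioo]
      constructor
      · rintro ⟨⟨_, h2⟩, h3⟩; exact ⟨h3, h2⟩
      · rintro ⟨h1, h2⟩; exact ⟨⟨by linarith, h2⟩, h1⟩
    have hval : (∫ t in Icc (0:ℝ) 1, (if z < t then (1:ℝ) else 0) * haar1 j m t) = 1 - z := by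
      rw [he, hSeq, int_ind_one measurableSet_Ioo
        (fun t ht => ⟨by rcases ht with ⟨h1,h2⟩; linarith, le_of_lt ht.2⟩)]
      rw [Real.volume_Ioo, ENNReal.toReal_ofReal (by linarith)]
    refine ⟨?_, ?_, ?_⟩
    · rw [hval, Int.toNat_of_nonpos (le_of_lt hj), abs_of_nonneg (by linarith)]
      norm_num; linarith
    · intro hmem
      exfalso; apply hmem; unfold memI; rw [if_pos hj]; exact ⟨hz0, hz1⟩
    · rw [show (fun t => (if z < t then (1:ℝ) else 0) * haar1 j m t) = _ from he]
      exact (integrable_const (1:ℝ)).indicator (measurableSet_Ico.inter measurableSet_Ioi)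
  · -- j ≥ 0
    set n := j.toNat with hn
    set a : ℝ := (m:ℝ)/2^n with ha
    set c : ℝ := (2*(m:ℝ)+1)/2^(n+1) with hc
    set b : ℝ := ((m:ℝ)+1)/2^n with hb
    have hq : (0:ℝ) < 2^n := by positivity
    have hq1 : (0:ℝ) < 2^(n+1) := by positivity
    have hca : c - a = (2^(n+1))⁻¹ := by
      rw [ha, hc, pow_succ]; field_simp; ring
    have hbc : b - c = (2^(n+1))⁻¹ := by
      rw [hb, hc, pow_succ]; field_simp; ring
    have hhalf : (0:ℝ) < (2^(n+1):ℝ)⁻¹ := by positivity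
    have hhalf2 : ((2:ℝ)^(n+1))⁻¹ ≤ ((2:ℝ)^n)⁻¹ := by
      rw [pow_succ, inv_le_inv₀ (by positivity) hq]
      nlinarith
    have hac : a < c := by nlinarith
    have hcb : c < b := by nlinarith
    have ha0 : 0 ≤ a := by positivity
    have hb1 : b ≤ 1 := by
      rw [hb, div_le_one hq]
      have : (m:ℝ) + 1 ≤ ((2^n : ℕ):ℝ) := by exact_mod_cast Nat.succ_le_of_lt hm
      simpa using this
    have he : (fun t => (if z < t then (1:ℝ) else 0) * haar1 j m t)
        = fun t => (Ico a c ∩ Ioi z).indicator (fun _ => (1:ℝ)) t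
            - (Ico c b ∩ Ioi z).indicator (fun _ => (1:ℝ)) t := by
      funext t
      by_cases hzt : z < t
      · rw [if_pos hzt, one_mul, ind_inter_Ioi hzt, ind_inter_Ioi hzt, haar1_eq_pos hj]
      · rw [if_neg hzt, zero_mul, ind_inter_Ioi' hzt, ind_inter_Ioi' hzt]
        norm_num
    have hmeas1 : MeasurableSet (Ico a c ∩ Ioi z) := measurableSet_Ico.inter measurableSet_Ioi
    have hmeas2 : MeasurableSet (Ico c b ∩ Ioi z) := measurableSet_Ico.inter measurableSet_Ioi
    have hsub1 : Ico a c ∩ Ioi z ⊆ Icc 0 1 := fun t ht =>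
      ⟨le_trans ha0 ht.1.1, le_trans (le_of_lt ht.1.2) (le_trans (le_of_lt hcb) hb1)⟩
    have hsub2 : Ico c b ∩ Ioi z ⊆ Icc 0 1 := fun t ht =>
      ⟨le_trans (le_trans ha0 (le_of_lt hac)) ht.1.1, le_trans (le_of_lt ht.1.2) hb1⟩
    have hval : (∫ t in Icc (0:ℝ) 1, (if z < t then (1:ℝ) else 0) * haar1 j m t)
        = (volume (Ico a c ∩ Ioi z)).toReal - (volume (Ico c b ∩ Ioi z)).toReal := by
      rw [he, integral_sub ((integrable_const (1:ℝ)).indicator hmeas1)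
        ((integrable_const (1:ℝ)).indicator hmeas2),
        int_ind_one hmeas1 hsub1, int_ind_one hmeas2 hsub2]
    have hV1n : 0 ≤ (volume (Ico a c ∩ Ioi z)).toReal := ENNReal.toReal_nonneg
    have hV2n : 0 ≤ (volume (Ico c b ∩ Ioi z)).toReal := ENNReal.toReal_nonneg
    have hV1 : (volume (Ico a c ∩ Ioi z)).toReal ≤ (2^(n+1):ℝ)⁻¹ := by
      calc (volume (Ico a c ∩ Ioi z)).toReal ≤ (volume (Ico a c)).toReal := by
            refine ENNReal.toReal_mono ?_ (measure_mono Set.inter_subset_left)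
            rw [Real.volume_Ico]; exact ENNReal.ofReal_ne_top
      _ = c - a := by rw [Real.volume_Ico, ENNReal.toReal_ofReal (by linarith)]
      _ ≤ (2^(n+1):ℝ)⁻¹ := le_of_eq hca
    have hV2 : (volume (Ico c b ∩ Ioi z)).toReal ≤ (2^(n+1):ℝ)⁻¹ := by
      calc (volume (Ico c b ∩ Ioi z)).toReal ≤ (volume (Ico c b)).toReal := by
            refine ENNReal.toReal_mono ?_ (measure_mono Set.inter_subset_left)
            rw [Real.volume_Ico]; exact ENNReal.ofReal_ne_top
      _ = b - c := by rw [Real.volume_Ico, ENNReal.toReal_ofReal (by linarith)]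
      _ ≤ (2^(n+1):ℝ)⁻¹ := le_of_eq hbc
    refine ⟨?_, ?_, ?_⟩
    · rw [hval, abs_le]
      constructor <;> nlinarith
    · intro hmem
      unfold memI at hmem
      rw [if_neg hj] at hmem
      simp only [← hn, ← ha, ← hb] at hmem
      push_neg at hmem
      rcases le_or_gt a z with hza | hza
      · have hbz : b ≤ z := hmem hza
        have h1 : Ico a c ∩ Ioi z = ∅ := by
          ext t; simp only [Set.mem_inter_iff, Set.mem_Ico, Set.mem_Ioi,
            Set.mem_empty_iff_false, iff_false, not_and]
          rintro ⟨_, h2⟩ h3; linarith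
        have h2 : Ico c b ∩ Ioi z = ∅ := by
          ext t; simp only [Set.mem_inter_iff, Set.mem_Ico, Set.mem_Ioi,
            Set.mem_empty_iff_false, iff_false, not_and]
          rintro ⟨_, h2⟩ h3; linarith
        rw [hval, h1, h2]; simp
      · have h1 : Ico a c ∩ Ioi z = Ico a c := by
          rw [Set.inter_eq_left]; intro t ht; exact lt_of_lt_of_le hza ht.1
        have h2 : Ico c b ∩ Ioi z = Ico c b := by
          rw [Set.inter_eq_left]; intro t ht; exact lt_of_lt_of_le hza (le_trans hac.le ht.1)
        rw [hval, h1, h2, Real.volume_Ico, Real.volume_Ico,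
          ENNReal.toReal_ofReal (by linarith), ENNReal.toReal_ofReal (by linarith)]
        linarith
    · rw [show (fun t => (if z < t then (1:ℝ) else 0) * haar1 j m t) = _ from he]
      exact ((integrable_const (1:ℝ)).indicator hmeas1).sub
        ((integrable_const (1:ℝ)).indicator hmeas2)

lemma oneD_B {j : ℤ} {m : ℕ} (hm : m < 2 ^ j.toNat) :
    |∫ t in Icc (0:ℝ) 1, t * haar1 j m t| ≤ (((2:ℝ) ^ j.toNat)^2)⁻¹ ∧
    IntegrableOn (fun t => t * haar1 j m t) (Icc 0 1) := by
  have hid : IntegrableOn (fun s : ℝ => s) (Icc (0:ℝ) 1) := continuous_id.integrableOn_Icc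
  by_cases hj : j < 0
  · have he : (fun t => t * haar1 j m t) = fun t => (Ico (0:ℝ) 1).indicator (fun s => s) t := by
      funext t
      rw [haar1_eq_neg hj, mul_ind_one]
    have hval : (∫ t in Icc (0:ℝ) 1, t * haar1 j m t) = 1/2 := by
      rw [he, int_ind_id' zero_le_one Set.Ico_subset_Icc_self]
      norm_num
    refine ⟨?_, ?_⟩
    · rw [hval, Int.toNat_of_nonpos (le_of_lt hj)]
      rw [abs_of_nonneg (by norm_num : (0:ℝ) ≤ 1/2)]
      norm_num
    · rw [show (fun t => t * haar1 j m t) = _ from he]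
      exact hid.indicator measurableSet_Ico
  · set n := j.toNat with hn
    set a : ℝ := (m:ℝ)/2^n with ha
    set c : ℝ := (2*(m:ℝ)+1)/2^(n+1) with hc
    set b : ℝ := ((m:ℝ)+1)/2^n with hb
    have hq : (0:ℝ) < 2^n := by positivity
    have hq1 : (0:ℝ) < 2^(n+1) := by positivity
    have hca : c - a = (2^(n+1))⁻¹ := by
      rw [ha, hc, pow_succ]; field_simp; ring
    have hbc : b - c = (2^(n+1))⁻¹ := by
      rw [hb, hc, pow_succ]; field_simp; ring
    have hhalf : (0:ℝ) < (2^(n+1):ℝ)⁻¹ := by positivity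
    have hac : a < c := by nlinarith
    have hcb : c < b := by nlinarith
    have ha0 : 0 ≤ a := by positivity
    have hb1 : b ≤ 1 := by
      rw [hb, div_le_one hq]
      have : (m:ℝ) + 1 ≤ ((2^n : ℕ):ℝ) := by exact_mod_cast Nat.succ_le_of_lt hm
      simpa using this
    have hsub1 : Ico a c ⊆ Icc 0 1 := fun t ht =>
      ⟨le_trans ha0 ht.1, le_trans (le_of_lt ht.2) (le_trans (le_of_lt hcb) hb1)⟩
    have hsub2 : Ico c b ⊆ Icc 0 1 := fun t ht =>
      ⟨le_trans (le_trans ha0 hac.le) ht.1, le_trans (le_of_lt ht.2) hb1⟩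
    have he : (fun t => t * haar1 j m t)
        = fun t => (Ico a c).indicator (fun s => s) t - (Ico c b).indicator (fun s => s) t := by
      funext t
      rw [haar1_eq_pos hj, mul_sub, mul_ind_one, mul_ind_one]
    have hval : (∫ t in Icc (0:ℝ) 1, t * haar1 j m t)
        = (c^2 - a^2)/2 - (b^2 - c^2)/2 := by
      rw [he, integral_sub (hid.indicator measurableSet_Ico) (hid.indicator measurableSet_Ico),
        int_ind_id' hac.le hsub1, int_ind_id' hcb.le hsub2]
    have hvv : (c^2 - a^2)/2 - (b^2 - c^2)/2 = -((((2:ℝ)^n)^2 * 4)⁻¹) := by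
      rw [ha, hb, hc, pow_succ]; field_simp; ring
    refine ⟨?_, ?_⟩
    · rw [hval, hvv, abs_neg, abs_of_nonneg (by positivity)]
      rw [inv_le_inv₀ (by positivity) (by positivity)]
      nlinarith
    · rw [show (fun t => t * haar1 j m t) = _ from he]
      exact (hid.indicator measurableSet_Ico).sub (hid.indicator measurableSet_Ico)

end oneDlemmas

set_option maxHeartbeats 2000000 in
open Classical in
/-- If the dyadic interval `I_{j,m}` contains at most `B` points of the `N`-point set `P`,
then `|⟨D_P, h_{j,m}⟩| ≤ (B/N)·2^{-|j|} + C_d·2^{-2|j|}` with `C_d` depending only on `d`. -/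
theorem stmt9 (d : ℕ) (hd : 0 < d) :
    ∃ C : ℝ, 0 < C ∧ ∀ (N : ℕ), 0 < N → ∀ P : Fin N → Fin d → ℝ,
      (∀ k i, 0 ≤ P k i ∧ P k i < 1) →
      ∀ (j : Fin d → ℤ) (m : Fin d → ℕ), validIdx j m →
      ∀ B : ℕ,
        (Finset.univ.filter fun k : Fin N => ∀ i, memI (j i) (m i) (P k i)).card ≤ B →
        |haarCoef (discF N P) j m| ≤
          ((B : ℝ) / N) * (2 : ℝ) ^ (-(absj j : ℤ)) + C * (2 : ℝ) ^ (-(2 * (absj j : ℤ))) := by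
  classical
  refine ⟨1, one_pos, ?_⟩
  intro N hN P hP j m hvm B hB
  obtain ⟨hj1, hm⟩ := hvm
  have hA := fun (k : Fin N) (i : Fin d) => oneD_A (hm i) (P k i) (hP k i).1 (hP k i).2
  have hB2 := fun (i : Fin d) => oneD_B (hm i)
  have hI1 : ∀ k : Fin N, MeasureTheory.IntegrableOn
      (fun x : Fin d → ℝ => ∏ i, (if P k i < x i then (1:ℝ) else 0) * haar1 (j i) (m i) (x i))
      (Set.Icc 0 1) :=
    fun k => tensor_integrable (fun i t => (if P k i < t then (1:ℝ) else 0) * haar1 (j i) (m i) t) (fun i => (hA k i).2.2)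
  have hI2 : MeasureTheory.IntegrableOn
      (fun x : Fin d → ℝ => ∏ i, (x i) * haar1 (j i) (m i) (x i)) (Set.Icc 0 1) :=
    tensor_integrable (fun i t => t * haar1 (j i) (m i) t) (fun i => (hB2 i).2)
  have hpt : ∀ x : Fin d → ℝ, discF N P x * haarD j m x
      = (1/(N:ℝ)) * ∑ k, (∏ i, (if P k i < x i then (1:ℝ) else 0) * haar1 (j i) (m i) (x i))
        - ∏ i, (x i) * haar1 (j i) (m i) (x i) := by
    intro x
    unfold discF haarD
    rw [sub_mul, mul_assoc, Finset.sum_mul, ← Finset.prod_mul_distrib]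
    congr 2
    refine Finset.sum_congr rfl fun k _ => ?_
    by_cases hk : ∀ i, P k i < x i
    · rw [if_pos (fun i => ⟨(hP k i).1, hk i⟩), one_mul]
      exact Finset.prod_congr rfl fun i _ => by rw [if_pos (hk i), one_mul]
    · push_neg at hk
      obtain ⟨i₀, hi₀⟩ := hk
      rw [if_neg (fun h => absurd (h i₀).2 (not_lt.mpr hi₀)), zero_mul]
      exact (Finset.prod_eq_zero (Finset.mem_univ i₀)
        (by rw [if_neg (not_lt.mpr hi₀), zero_mul])).symm
  have hcoef : haarCoef (discF N P) j m
      = (1/(N:ℝ)) * ∑ k : Fin N, ∏ i, (∫ t in Set.Icc (0:ℝ) 1,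
            (if P k i < t then (1:ℝ) else 0) * haar1 (j i) (m i) t)
        - ∏ i, ∫ t in Set.Icc (0:ℝ) 1, t * haar1 (j i) (m i) t := by
    unfold haarCoef
    simp_rw [hpt]
    rw [MeasureTheory.integral_sub
        ((MeasureTheory.integrable_finset_sum _ (fun k _ => hI1 k)).const_mul _) hI2,
      MeasureTheory.integral_const_mul, MeasureTheory.integral_finset_sum _ (fun k _ => hI1 k)]
    congr 1
    · congr 1
      exact Finset.sum_congr rfl fun k _ => tensor_integral (fun i t => (if P k i < t then (1:ℝ) else 0) * haar1 (j i) (m i) t)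
    · exact tensor_integral (fun i t => t * haar1 (j i) (m i) t)
  rw [hcoef]
  set S : ℝ := ∑ k : Fin N, ∏ i, ∫ t in Set.Icc (0:ℝ) 1,
      (if P k i < t then (1:ℝ) else 0) * haar1 (j i) (m i) t with hSdef
  set Q : ℝ := ∏ i, ∫ t in Set.Icc (0:ℝ) 1, t * haar1 (j i) (m i) t with hQdef
  set w : ℝ := ((2:ℝ) ^ absj j)⁻¹ with hw
  have hw0 : 0 ≤ w := by positivity
  have hprod1 : ∀ k : Fin N,
      |∏ i, ∫ t in Set.Icc (0:ℝ) 1, (if P k i < t then (1:ℝ) else 0) * haar1 (j i) (m i) t|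
        ≤ if (∀ i, memI (j i) (m i) (P k i)) then w else 0 := by
    intro k
    by_cases hk : ∀ i, memI (j i) (m i) (P k i)
    · rw [if_pos hk, Finset.abs_prod, hw]
      calc (∏ i, |∫ t in Set.Icc (0:ℝ) 1,
              (if P k i < t then (1:ℝ) else 0) * haar1 (j i) (m i) t|)
          ≤ ∏ i, ((2:ℝ)^(j i).toNat)⁻¹ :=
            Finset.prod_le_prod (fun i _ => abs_nonneg _) (fun i _ => (hA k i).1)
        _ = ((2:ℝ)^ absj j)⁻¹ := by
            rw [Finset.prod_inv_distrib, Finset.prod_pow_eq_pow_sum, absj]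
    · rw [if_neg hk]
      push_neg at hk
      obtain ⟨i₀, hi₀⟩ := hk
      rw [Finset.prod_eq_zero (Finset.mem_univ i₀) ((hA k i₀).2.1 hi₀), abs_zero]
  have hsum : |S| ≤ (B:ℝ) * w := by
    rw [hSdef]
    calc |∑ k : Fin N, ∏ i, ∫ t in Set.Icc (0:ℝ) 1,
            (if P k i < t then (1:ℝ) else 0) * haar1 (j i) (m i) t|
        ≤ ∑ k : Fin N, |∏ i, ∫ t in Set.Icc (0:ℝ) 1,
            (if P k i < t then (1:ℝ) else 0) * haar1 (j i) (m i) t| :=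
          Finset.abs_sum_le_sum_abs _ _
      _ ≤ ∑ k : Fin N, (if (∀ i, memI (j i) (m i) (P k i)) then w else 0) :=
          Finset.sum_le_sum fun k _ => hprod1 k
      _ = ∑ k ∈ Finset.univ.filter (fun k : Fin N => ∀ i, memI (j i) (m i) (P k i)), w := by
          rw [Finset.sum_filter]
      _ = (Finset.univ.filter (fun k : Fin N => ∀ i, memI (j i) (m i) (P k i))).card * w := by
          rw [Finset.sum_const, nsmul_eq_mul]
      _ ≤ (B:ℝ) * w := by
          apply mul_le_mul_of_nonneg_right _ hw0
          exact_mod_cast hB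
  have hsnd : |Q| ≤ w^2 := by
    rw [hQdef, Finset.abs_prod, hw, inv_pow]
    calc (∏ i, |∫ t in Set.Icc (0:ℝ) 1, t * haar1 (j i) (m i) t|)
        ≤ ∏ i, (((2:ℝ)^(j i).toNat)^2)⁻¹ :=
          Finset.prod_le_prod (fun i _ => abs_nonneg _) (fun i _ => (hB2 i).1)
      _ = (((2:ℝ)^ absj j)^2)⁻¹ := by
          rw [Finset.prod_inv_distrib, Finset.prod_pow, Finset.prod_pow_eq_pow_sum, absj]
  have hpow1 : (2:ℝ) ^ (-(absj j : ℤ)) = w := by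
    rw [hw, zpow_neg, zpow_natCast]
  have hpow2 : (2:ℝ) ^ (-(2 * (absj j : ℤ))) = w^2 := by
    rw [show -(2*(absj j:ℤ)) = (-(absj j:ℤ)) + (-(absj j:ℤ)) by ring,
      zpow_add₀ (by norm_num : (2:ℝ) ≠ 0), hpow1, sq]
  rw [hpow1, hpow2, one_mul]
  have hN0 : (0:ℝ) < (N:ℝ) := by exact_mod_cast hN
  calc |(1/(N:ℝ)) * S - Q| ≤ |(1/(N:ℝ)) * S| + |Q| := abs_sub _ _
    _ = (1/(N:ℝ)) * |S| + |Q| := by rw [abs_mul, abs_of_nonneg (by positivity)]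
    _ ≤ (1/(N:ℝ)) * ((B:ℝ) * w) + w^2 := by
        refine add_le_add (mul_le_mul_of_nonneg_left hsum (by positivity)) hsnd
    _ = ((B:ℝ)/(N:ℝ)) * w + w^2 := by ring
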